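/- arXiv:2003.04595 — 5 statements merged into one kernel-verified Lean document; each statement's English description precedes it below -/
import Mathlib

section
/- Let H be a real Hilbert space and J : H → ℝ ∪ {+∞} be a proper, convex, lower semi-continuous, absolutely one-homogeneous functional with null space N(J) = {u ∈ H : J(u) = 0}. Define the dual quantity J_*(u) = sup{⟨u, p⟩/J(p) : p ∈ N(J)^⊥, J(p) > 0}. Then for every u ∈ N(J)^⊥ with 0 < J(u) < ∞ one has J_*(u) ≥ ‖u‖²/J(u), and equality holds if and only if u is an eigenvector of ∂J, i.e., λ u ∈ ∂J(u) for λ = J(u)/‖u‖². -/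
open scoped RealInnerProductSpace

noncomputable section

variable {H : Type*} [NormedAddCommGroup H] [InnerProductSpace ℝ H] [CompleteSpace H]

/-- `J` is absolutely one-homogeneous: `J (c • u) = |c| * J u` for `c ≠ 0`, and `J 0 = 0`. -/
def AbsOneHom (J : H → EReal) : Prop :=
  J 0 = 0 ∧ ∀ c : ℝ, c ≠ 0 → ∀ u : H, J (c • u) = ((|c| : ℝ) : EReal) * J u

/-- Convexity of an extended-real-valued functional. -/
def ConvexFn (J : H → EReal) : Prop :=
  ∀ x y : H, ∀ t : ℝ, 0 ≤ t → t ≤ 1 →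
    J (t • x + (1 - t) • y) ≤ ((t : ℝ) : EReal) * J x + (((1 - t) : ℝ) : EReal) * J y

/-- `J` is proper: it never takes the value `⊥` and is not identically `⊤`. -/
def ProperFn (J : H → EReal) : Prop := (∀ u : H, J u ≠ ⊥) ∧ ∃ u : H, J u ≠ ⊤

/-- `u` is orthogonal to the null space `N(J) = {n : J n = 0}` of `J`. -/
def InNullPerp (J : H → EReal) (u : H) : Prop := ∀ n : H, J n = 0 → ⟪u, n⟫ = 0

/-- The objective `v ↦ ½‖v - u‖² + α J(v)` of the proximal problem for `J`. -/
def ProxObj (J : H → EReal) (α : ℝ) (u v : H) : EReal :=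
  (((2 : ℝ)⁻¹ * ‖v - u‖ ^ 2 : ℝ) : EReal) + (α : EReal) * J v

/-- `v` is a minimizer of `w ↦ ½‖w - u‖² + α J(w)`, i.e. `v = prox_α^J(u)`
(the minimizer is unique by strict convexity). -/
def IsProxPt (J : H → EReal) (α : ℝ) (u v : H) : Prop :=
  ∀ w : H, ProxObj J α u v ≤ ProxObj J α u w

/-- The dual quantity `J_*(u) = sup { ⟪u,p⟫ / J(p) : p ∈ N(J)^⊥, J(p) > 0 }`. -/
def Jdual (J : H → EReal) (u : H) : EReal :=
  ⨆ p : {p : H // InNullPerp J p ∧ 0 < J p}, ((⟪u, (p : H)⟫ : ℝ) : EReal) / J (p : H)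

/-- `p` belongs to the subdifferential `∂J(u)`. -/
def InSubdiff (J : H → EReal) (u p : H) : Prop :=
  ∀ v : H, J u + ((⟪p, v - u⟫ : ℝ) : EReal) ≤ J v

set_option linter.unusedSectionVars false

lemma JJneg (J : H → EReal) (hhom : AbsOneHom J) (x : H) : J (-x) = J x := by
  have := hhom.2 (-1) (by norm_num) x
  simpa using this

lemma JJnonneg (J : H → EReal) (hproper : ProperFn J) (hconv : ConvexFn J)
    (hhom : AbsOneHom J) (x : H) : 0 ≤ J x := by
  rcases eq_or_ne (J x) ⊤ with h | h
  · simp [h]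
  lift J x to ℝ using ⟨h, hproper.1 x⟩ with a ha
  have hc := hconv x (-x) (1/2) (by norm_num) (by norm_num)
  rw [JJneg J hhom x, ← ha] at hc
  have hz : ((1/2 : ℝ)) • x + ((1 - 1/2 : ℝ)) • (-x) = (0 : H) := by
    rw [smul_neg, ← sub_eq_add_neg, sub_eq_zero]; norm_num
  rw [hz, hhom.1, ← EReal.coe_mul, ← EReal.coe_mul, ← EReal.coe_add] at hc
  have h0 : (0:ℝ) ≤ 1/2 * a + (1 - 1/2) * a := by exact_mod_cast hc
  exact_mod_cast (by linarith : (0:ℝ) ≤ a)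

lemma JJsubadd (J : H → EReal) (hproper : ProperFn J) (hconv : ConvexFn J)
    (hhom : AbsOneHom J) (x y : H) : J (x + y) ≤ J x + J y := by
  rcases eq_or_ne (J x) ⊤ with hx | hx
  · rw [hx, EReal.top_add_of_ne_bot (hproper.1 y)]; exact le_top
  rcases eq_or_ne (J y) ⊤ with hy | hy
  · rw [hy, EReal.add_top_of_ne_bot (hproper.1 x)]; exact le_top
  lift J x to ℝ using ⟨hx, hproper.1 x⟩ with a ha
  lift J y to ℝ using ⟨hy, hproper.1 y⟩ with b hb
  have hc : J (((1/2 : ℝ)) • x + ((1 - 1/2 : ℝ)) • y) ≤ (((1/2) * a + (1/2) * b : ℝ) : EReal) := by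
    have hc := hconv x y (1/2) (by norm_num) (by norm_num)
    rw [← ha, ← hb, ← EReal.coe_mul, ← EReal.coe_mul, ← EReal.coe_add] at hc
    convert hc using 2
    norm_num
  have hwnt : J (((1/2 : ℝ)) • x + ((1 - 1/2 : ℝ)) • y) ≠ ⊤ := by
    intro h; rw [h, top_le_iff] at hc; exact EReal.coe_ne_top _ hc
  lift J (((1/2 : ℝ)) • x + ((1 - 1/2 : ℝ)) • y) to ℝ using ⟨hwnt, hproper.1 _⟩ with s hs
  have hs' : s ≤ 1/2 * a + 1/2 * b := by exact_mod_cast hc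
  have h2 := hhom.2 2 two_ne_zero (((1/2 : ℝ)) • x + ((1 - 1/2 : ℝ)) • y)
  have hxy : (2:ℝ) • (((1/2 : ℝ)) • x + ((1 - 1/2 : ℝ)) • y) = x + y := by module
  rw [hxy, ← hs, ← EReal.coe_mul] at h2
  rw [h2, ← EReal.coe_add, EReal.coe_le_coe_iff]
  rw [abs_of_pos (by norm_num : (0:ℝ) < 2)]
  linarith

lemma JJinv (J : H → EReal) (hproper : ProperFn J) (hconv : ConvexFn J)
    (hhom : AbsOneHom J) (q n : H) (hn : J n = 0) : J (q + n) = J q := by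
  have h1 : J (q + n) ≤ J q := by
    have := JJsubadd J hproper hconv hhom q n
    rwa [hn, add_zero] at this
  have h2 : J q ≤ J (q + n) := by
    have := JJsubadd J hproper hconv hhom (q + n) (-n)
    rw [JJneg J hhom n, hn, add_zero] at this
    simpa using this
  exact le_antisymm h1 h2

/-- **Lower bound for the dual quantity and eigenvector characterization.**
For proper, convex, lsc, absolutely one-homogeneous `J` and `u ∈ N(J)^⊥` with
`0 < J u < ∞`, one has `J_*(u) ≥ ‖u‖² / J(u)`, and equality holds iff `u` is an
eigenvector of `∂J`, i.e. `λ • u ∈ ∂J(u)` for `λ = J(u)/‖u‖²`. -/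
theorem jdual_ge_and_eq_iff_eigenvector
    (J : H → EReal) (hproper : ProperFn J) (hconv : ConvexFn J)
    (hlsc : LowerSemicontinuous J) (hhom : AbsOneHom J)
    (u : H) (hu : InNullPerp J u) (hJpos : 0 < J u) (hJfin : J u ≠ ⊤) :
    ((‖u‖ ^ 2 : ℝ) : EReal) / J u ≤ Jdual J u ∧
    (Jdual J u = ((‖u‖ ^ 2 : ℝ) : EReal) / J u ↔
      InSubdiff J u (((J u).toReal / ‖u‖ ^ 2) • u)) := by
  -- basic facts
  obtain ⟨a, hA⟩ : ∃ a : ℝ, J u = (a : EReal) :=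
    ⟨(J u).toReal, (EReal.coe_toReal hJfin (hproper.1 u)).symm⟩
  have htr : (J u).toReal = a := by rw [hA]; exact EReal.toReal_coe a
  rw [htr]
  have ha : 0 < a := by rw [hA] at hJpos; exact_mod_cast hJpos
  have hu0 : u ≠ 0 := by
    intro h; rw [h, hhom.1] at hJpos; exact lt_irrefl _ hJpos
  have hn2 : 0 < ‖u‖ ^ 2 := pow_pos (norm_pos_iff.mpr hu0) 2
  obtain ⟨lam, hlam⟩ : ∃ l : ℝ, l = a / ‖u‖ ^ 2 := ⟨_, rfl⟩
  rw [← hlam]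
  have hlampos : 0 < lam := hlam ▸ div_pos ha hn2
  have hlamn : lam * ‖u‖ ^ 2 = a := by rw [hlam]; exact div_mul_cancel₀ a (ne_of_gt hn2)
  -- inner product computation
  have hinner : ∀ v : H, (⟪lam • u, v - u⟫ : ℝ) = lam * ⟪u, v⟫ - a := by
    intro v
    rw [real_inner_smul_left, inner_sub_right, real_inner_self_eq_norm_sq, mul_sub, hlamn]
  have hLHS : ∀ v : H, J u + ((⟪lam • u, v - u⟫ : ℝ) : EReal) = ((lam * ⟪u, v⟫ : ℝ) : EReal) := by
    intro v
    rw [hA, hinner v, ← EReal.coe_add]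
    norm_num
  -- part 1
  have h1 : ((‖u‖ ^ 2 : ℝ) : EReal) / J u ≤ Jdual J u := by
    have := le_iSup (fun p : {p : H // InNullPerp J p ∧ 0 < J p} =>
      ((⟪u, (p : H)⟫ : ℝ) : EReal) / J (p : H)) ⟨u, hu, hJpos⟩
    refine le_trans ?_ this
    simp [real_inner_self_eq_norm_sq]
  refine ⟨h1, ?_, ?_⟩
  · -- equality → eigenvector
    intro heq
    -- key: for p ∈ N^⊥ with J p = c, 0 < c : lam * ⟪u,p⟫ ≤ c
    have key : ∀ p : H, InNullPerp J p → ∀ c : ℝ, J p = (c : EReal) → 0 < c →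
        lam * ⟪u, p⟫ ≤ c := by
      intro p hp c hc hcpos
      have hterm : ((⟪u, p⟫ : ℝ) : EReal) / J p ≤ Jdual J u := by
        exact le_iSup (fun p : {p : H // InNullPerp J p ∧ 0 < J p} =>
          ((⟪u, (p : H)⟫ : ℝ) : EReal) / J (p : H)) ⟨p, hp, by rw [hc]; exact_mod_cast hcpos⟩
      rw [heq, hA, hc, ← EReal.coe_div, ← EReal.coe_div, EReal.coe_le_coe_iff] at hterm
      rw [div_le_div_iff₀ hcpos ha] at hterm
      rw [hlam, div_mul_eq_mul_div, div_le_iff₀ hn2]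
      nlinarith [hterm]
    -- null space submodule
    let K : Submodule ℝ H :=
      { carrier := {n : H | J n = 0}
        zero_mem' := hhom.1
        add_mem' := by
          intro x y hx hy
          have h := JJsubadd J hproper hconv hhom x y
          rw [Set.mem_setOf_eq] at hx hy
          rw [hx, hy, add_zero] at h
          exact le_antisymm h (JJnonneg J hproper hconv hhom _)
        smul_mem' := by
          intro c x hx
          rcases eq_or_ne c 0 with rfl | hc
          · rw [zero_smul]; exact hhom.1
          · show J (c • x) = 0
            rw [hhom.2 c hc x, Set.mem_setOf_eq.mp hx, mul_zero] }
    have hKclosed : IsClosed (K : Set H) := by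
      have : (K : Set H) = J ⁻¹' Set.Iic 0 := by
        ext n
        simp only [Set.mem_preimage, Set.mem_Iic]
        exact ⟨fun h => le_of_eq h, fun h => le_antisymm h (JJnonneg J hproper hconv hhom n)⟩
      rw [this]
      exact hlsc.isClosed_preimage 0
    haveI : CompleteSpace K := hKclosed.completeSpace_coe
    intro v
    obtain ⟨n, hnK, q, hqK, hv⟩ := K.exists_add_mem_mem_orthogonal v
    have hJn : J n = 0 := hnK
    have hJv : J v = J q := by rw [hv, add_comm]; exact JJinv J hproper hconv hhom q n hJn
    have huv : (⟪u, v⟫ : ℝ) = ⟪u, q⟫ := by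
      rw [hv, inner_add_right, hu n hJn, zero_add]
    rw [hLHS v, huv, hJv]
    rcases eq_or_ne (J q) ⊤ with hq | hq
    · rw [hq]; exact le_top
    lift J q to ℝ using ⟨hq, hproper.1 q⟩ with c hc
    have hc0 : 0 ≤ c := by
      have := JJnonneg J hproper hconv hhom q
      rw [← hc] at this; exact_mod_cast this
    rcases eq_or_lt_of_le hc0 with hc0 | hc0
    · -- c = 0 : q ∈ K ∩ K^⊥ so q = 0
      have hqK' : q ∈ K := by show J q = 0; rw [← hc, ← hc0]; rfl
      have : (⟪q, q⟫ : ℝ) = 0 := Submodule.inner_right_of_mem_orthogonal hqK' hqK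
      have hq0 : q = 0 := inner_self_eq_zero.mp this
      rw [hq0, inner_zero_right, mul_zero, ← hc0]
    · have hqperp : InNullPerp J q := by
        intro m hm
        rw [real_inner_comm]
        exact Submodule.inner_right_of_mem_orthogonal (show m ∈ K from hm) hqK
      exact_mod_cast key q hqperp c hc.symm hc0
  · -- eigenvector → equality
    intro hsub
    refine le_antisymm ?_ h1
    rw [hA, ← EReal.coe_div]
    refine iSup_le ?_
    rintro ⟨p, hp, hppos⟩
    simp only
    rcases eq_or_ne (J p) ⊤ with hq | hq
    · rw [hq, EReal.div_top]
      exact_mod_cast div_nonneg (sq_nonneg _) ha.le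
    lift J p to ℝ using ⟨hq, hproper.1 p⟩ with c hc
    have hcpos : 0 < c := by exact_mod_cast hppos
    have hkey : lam * ⟪u, p⟫ ≤ c := by
      have h := hsub p
      rw [hLHS p, ← hc, EReal.coe_le_coe_iff] at h
      exact h
    rw [← EReal.coe_div, EReal.coe_le_coe_iff, div_le_div_iff₀ hcpos ha]
    rw [hlam, div_mul_eq_mul_div, div_le_iff₀ hn2] at hkey
    nlinarith [hkey]

end
end

section
/- Let H be a real Hilbert space and J : H → ℝ ∪ {+∞} be a proper, convex, lower semi-continuous, absolutely one-homogeneous functional with null space N(J) = {u : J(u) = 0}. For u ∈ N(J)^⊥ with 0 < J(u) < ∞ and α > 0, let prox_α^J(u) denote the unique minimizer of v ↦ ½‖v − u‖² + αJ(v). Then prox_α^J(u) = 0 if and only if α ≥ J_*(u), where J_*(u) = sup{⟨u, p⟩/J(p) : p ∈ N(J)^⊥, J(p) > 0}. -/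
open scoped RealInnerProductSpace

noncomputable section

variable {H : Type*} [NormedAddCommGroup H] [InnerProductSpace ℝ H] [CompleteSpace H]

-- auxiliary lemmas

lemma J_neg_eq (J : H → EReal) (hhom : AbsOneHom J) (v : H) : J (-v) = J v := by
  have := hhom.2 (-1) (by norm_num) v
  simpa using this

lemma J_nonneg (J : H → EReal) (hproper : ProperFn J) (hconv : ConvexFn J)
    (hhom : AbsOneHom J) (v : H) : 0 ≤ J v := by
  have h := hconv v (-v) (1/2) (by norm_num) (by norm_num)
  have hmid : (1/2 : ℝ) • v + (1 - 1/2 : ℝ) • (-v) = 0 := by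
    rw [show (1 - 1/2 : ℝ) = 1/2 by norm_num]; module
  rw [hmid, hhom.1, J_neg_eq J hhom] at h
  rcases eq_or_ne (J v) ⊤ with ht | ht
  · simp [ht]
  · lift J v to ℝ using ⟨ht, hproper.1 v⟩ with r hr
    norm_cast at h ⊢
    linarith

lemma J_subadd (J : H → EReal) (hproper : ProperFn J) (hconv : ConvexFn J)
    (hhom : AbsOneHom J) (a b : H) : J (a + b) ≤ J a + J b := by
  rcases eq_or_ne (J a) ⊤ with ha | ha
  · rw [ha, EReal.top_add_of_ne_bot (hproper.1 b)]; exact le_top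
  rcases eq_or_ne (J b) ⊤ with hb | hb
  · rw [hb, EReal.add_top_of_ne_bot (hproper.1 a)]; exact le_top
  have h := hconv a b (1/2) (by norm_num) (by norm_num)
  have hab := hhom.2 2 (by norm_num) ((1/2 : ℝ) • a + (1 - 1/2 : ℝ) • b)
  rw [show (2:ℝ) • ((1/2 : ℝ) • a + (1 - 1/2 : ℝ) • b) = a + b by module] at hab
  lift J a to ℝ using ⟨ha, hproper.1 a⟩ with ra hra
  lift J b to ℝ using ⟨hb, hproper.1 b⟩ with rb hrb
  have hmidne : J ((1/2 : ℝ) • a + (1 - 1/2 : ℝ) • b) ≠ ⊤ := by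
    intro hT
    rw [hT, top_le_iff, ← EReal.coe_mul, ← EReal.coe_mul, ← EReal.coe_add] at h
    exact EReal.coe_ne_top _ h
  lift J ((1/2 : ℝ) • a + (1 - 1/2 : ℝ) • b) to ℝ using
    ⟨hmidne, hproper.1 _⟩ with s hs
  rw [hab]
  norm_cast at h ⊢
  linarith

lemma J_add_null (J : H → EReal) (hproper : ProperFn J) (hconv : ConvexFn J)
    (hhom : AbsOneHom J) {n : H} (hn : J n = 0) (v : H) : J (v + n) = J v := by
  apply le_antisymm
  · have := J_subadd J hproper hconv hhom v n
    rwa [hn, add_zero] at this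
  · have := J_subadd J hproper hconv hhom (v + n) (-n)
    rwa [add_neg_cancel_right, J_neg_eq J hhom, hn, add_zero] at this


/-- **Vanishing of the proximal operator.**
For proper, convex, lsc, absolutely one-homogeneous `J`, `u ∈ N(J)^⊥` with
`0 < J u < ∞` and `α > 0`, one has `prox_α^J(u) = 0` (i.e. `0` is the unique
minimizer of `v ↦ ½‖v-u‖² + αJ(v)`) if and only if `α ≥ J_*(u)`. -/
theorem prox_eq_zero_iff
    (J : H → EReal) (hproper : ProperFn J) (hconv : ConvexFn J)
    (hlsc : LowerSemicontinuous J) (hhom : AbsOneHom J)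
    (u : H) (hu : InNullPerp J u) (hJpos : 0 < J u) (hJfin : J u ≠ ⊤)
    (α : ℝ) (hα : 0 < α) :
    IsProxPt J α u 0 ↔ Jdual J u ≤ (α : EReal) := by
  have hnn := J_nonneg J hproper hconv hhom
  -- key reformulation of IsProxPt
  have hkey : IsProxPt J α u 0 ↔
      ∀ w : H, ((⟪u, w⟫ : ℝ) : EReal) ≤ (((2:ℝ)⁻¹ * ‖w‖ ^ 2 : ℝ) : EReal) + (α : EReal) * J w := by
    unfold IsProxPt ProxObj
    refine forall_congr' fun w => ?_
    rw [hhom.1, mul_zero, add_zero, zero_sub, norm_neg]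
    rcases eq_or_ne (J w) ⊤ with ht | ht
    · have h1 : (((2:ℝ)⁻¹ * ‖w - u‖ ^ 2 : ℝ) : EReal) + (α : EReal) * J w = ⊤ := by
        rw [ht, EReal.mul_top_of_pos (by exact_mod_cast hα),
          EReal.add_top_of_ne_bot (EReal.coe_ne_bot _)]
      have h2 : (((2:ℝ)⁻¹ * ‖w‖ ^ 2 : ℝ) : EReal) + (α : EReal) * J w = ⊤ := by
        rw [ht, EReal.mul_top_of_pos (by exact_mod_cast hα),
          EReal.add_top_of_ne_bot (EReal.coe_ne_bot _)]
      rw [h1, h2]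
      simp
    · lift J w to ℝ using ⟨ht, hproper.1 w⟩ with r hr
      rw [← EReal.coe_mul, ← EReal.coe_add, ← EReal.coe_add, EReal.coe_le_coe_iff,
        EReal.coe_le_coe_iff]
      have hexp := @norm_sub_sq_real H _ _ w u
      have hic : ⟪w, u⟫ = ⟪u, w⟫ := real_inner_comm u w
      constructor <;> intro h <;> nlinarith [hexp, hic]
  rw [hkey]
  constructor
  · intro h
    apply iSup_le
    rintro ⟨p, hperp, hpos⟩
    simp only
    rcases eq_or_ne (J p) ⊤ with ht | ht
    · rw [ht, EReal.div_top]
      exact_mod_cast hα.le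
    lift J p to ℝ using ⟨ht, hproper.1 p⟩ with r hr
    rw [EReal.div_le_iff_le_mul hpos (EReal.coe_ne_top r), ← EReal.coe_mul,
      EReal.coe_le_coe_iff]
    have hrpos : 0 < r := by exact_mod_cast hpos
    have hp0 : p ≠ 0 := by
      intro h0; rw [h0, hhom.1] at hr; exact hrpos.ne' (by exact_mod_cast hr)
    have hnp : 0 < ‖p‖ ^ 2 := pow_pos (norm_pos_iff.2 hp0) 2
    -- for all t > 0 : t ⟪u,p⟫ ≤ t²‖p‖²/2 + α t r
    have hstep : ∀ t : ℝ, 0 < t → t * ⟪u, p⟫ ≤ (2:ℝ)⁻¹ * t ^ 2 * ‖p‖ ^ 2 + α * (t * r) := by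
      intro t ht
      have := h (t • p)
      rw [hhom.2 t ht.ne' p, abs_of_pos ht, ← hr, ← EReal.coe_mul, ← EReal.coe_mul,
        ← EReal.coe_add, real_inner_smul_right, EReal.coe_le_coe_iff, norm_smul] at this
      calc t * ⟪u, p⟫ ≤ (2:ℝ)⁻¹ * (‖t‖ * ‖p‖) ^ 2 + α * (t * r) := this
        _ = (2:ℝ)⁻¹ * t ^ 2 * ‖p‖ ^ 2 + α * (t * r) := by
            rw [Real.norm_eq_abs, mul_pow, sq_abs]; ring
    by_contra hcon
    push_neg at hcon
    set t : ℝ := (⟪u, p⟫ - r * α) / ‖p‖ ^ 2 with htdef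
    have htpos : 0 < t := div_pos (by linarith) hnp
    have := hstep t htpos
    have ht2 : t * ‖p‖ ^ 2 = ⟪u, p⟫ - r * α := div_mul_cancel₀ _ hnp.ne'
    nlinarith [mul_pos htpos (sub_pos.2 hcon)]
  · intro hsup w
    have hbound : ∀ p : H, InNullPerp J p → 0 < J p →
        ((⟪u, p⟫ : ℝ) : EReal) / J p ≤ (α : EReal) := by
      intro p hperp hpos
      exact le_trans (le_iSup (fun q : {p : H // InNullPerp J p ∧ 0 < J p} =>
        ((⟪u, (q : H)⟫ : ℝ) : EReal) / J (q : H)) ⟨p, hperp, hpos⟩) hsup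
    -- decompose w
    set K : Submodule ℝ H :=
      { carrier := {n | J n = 0}
        zero_mem' := hhom.1
        add_mem' := by
          intro a b ha hb
          refine le_antisymm ?_ (hnn _)
          have := J_subadd J hproper hconv hhom a b
          rw [Set.mem_setOf_eq] at ha hb
          rwa [ha, hb, add_zero] at this
        smul_mem' := by
          intro c x hx
          rw [Set.mem_setOf_eq] at hx ⊢
          rcases eq_or_ne c 0 with rfl | hc
          · rw [zero_smul]; exact hhom.1
          · rw [hhom.2 c hc x, hx, mul_zero] } with hKdef
    have hKclosed : IsClosed (K : Set H) := by
      have : (K : Set H) = J ⁻¹' Set.Iic 0 := by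
        ext x
        simp only [hKdef, Submodule.coe_set_mk, AddSubmonoid.coe_set_mk, Set.mem_setOf_eq,
          Set.mem_preimage, Set.mem_Iic]
        exact ⟨fun h => h.le, fun h => le_antisymm h (hnn x)⟩
      rw [this]
      exact hlsc.isClosed_preimage 0
    haveI : CompleteSpace K := hKclosed.completeSpace_coe
    set n : H := (K.orthogonalProjectionOnto w : H) with hn
    set p : H := w - n with hp
    have hnK : J n = 0 := (K.orthogonalProjectionOnto w).2
    have hpK : p ∈ Kᗮ := K.sub_starProjection_mem_orthogonal w
    have hwpn : w = p + n := by rw [hp]; abel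
    have hJw : J w = J p := by rw [hwpn]; exact J_add_null J hproper hconv hhom hnK p
    have hperp : InNullPerp J p := by
      intro m hm
      have hmK : m ∈ K := hm
      have := (Submodule.mem_orthogonal K p).1 hpK m hmK
      rw [real_inner_comm] at this; exact this
    have hiw : ⟪u, w⟫ = ⟪u, p⟫ := by
      rw [hwpn, inner_add_right, hu n hnK, add_zero]
    rcases (hnn p).eq_or_lt with hz | hpos
    · have : ⟪u, p⟫ = 0 := hu p hz.symm
      rw [hiw, this, EReal.coe_zero]
      refine add_nonneg ?_ ?_
      · exact_mod_cast by positivity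
      · exact mul_nonneg (by exact_mod_cast hα.le) (hnn w)
    · rcases eq_or_ne (J p) ⊤ with ht | ht
      · rw [hJw, ht, EReal.mul_top_of_pos (by exact_mod_cast hα),
          EReal.add_top_of_ne_bot (EReal.coe_ne_bot _)]
        exact le_top
      have hdiv := hbound p hperp hpos
      rw [EReal.div_le_iff_le_mul hpos ht] at hdiv
      lift J p to ℝ using ⟨ht, hproper.1 p⟩ with r hr
      rw [← EReal.coe_mul, EReal.coe_le_coe_iff] at hdiv
      rw [hJw, ← EReal.coe_mul, ← EReal.coe_add, hiw, EReal.coe_le_coe_iff]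
      have : (0:ℝ) ≤ (2:ℝ)⁻¹ * ‖w‖ ^ 2 := by positivity
      nlinarith

end
end

section
/- Let H be a real Hilbert space and J : H → ℝ ∪ {+∞} be a proper, convex, lower semi-continuous, absolutely one-homogeneous functional. Let u ∈ N(J)^⊥ with ‖u‖ = 1 and 0 < J(u) < ∞, let 0 < α < J_*(u), and set v = prox_α^J(u). Then v ≠ 0 and the renormalized vector u⁺ = v/‖v‖ satisfies J(u⁺) ≤ J(u); equality holds if and only if λ u ∈ ∂J(u) for λ = J(u)/‖u‖² = J(u). In particular, along the proximal power method u^{k+1} = prox_{α(u^k)}^J(u^k)/‖prox_{α(u^k)}^J(u^k)‖ with parameters α(u^k) < J_*(u^k), the energy J(u^{k+1}) ≤ J(u^k) decreases. -/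
open scoped RealInnerProductSpace

noncomputable section

variable {H : Type*} [NormedAddCommGroup H] [InnerProductSpace ℝ H] [CompleteSpace H]

set_option linter.unusedSectionVars false

lemma JJ_smul (J : H → EReal) (hhom : AbsOneHom J) {c : ℝ} (hc : 0 ≤ c) (u : H) :
    J (c • u) = (c : EReal) * J u := by
  rcases eq_or_lt_of_le hc with h | h
  · rw [← h, zero_smul, hhom.1]
    simp [EReal.zero_mul]
  · rw [hhom.2 c h.ne' u, abs_of_pos h]

lemma JJ_nonneg (J : H → EReal) (hconv : ConvexFn J) (hhom : AbsOneHom J) (u : H) :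
    0 ≤ J u := by
  by_cases htop : J u = ⊤
  · rw [htop]; exact le_top
  have hneg : J ((-1 : ℝ) • u) = J u := by
    rw [hhom.2 (-1) (by norm_num) u]; norm_num
  have h := hconv u ((-1 : ℝ) • u) (1/2) (by norm_num) (by norm_num)
  have h0 : (1/2 : ℝ) • u + (1 - 1/2 : ℝ) • ((-1:ℝ) • u) = 0 := by
    module
  rw [h0, hhom.1, hneg] at h
  by_cases hbot : J u = ⊥
  · rw [hbot] at h
    simp only [show ((1:ℝ)-1/2) = 1/2 by norm_num] at h
    rw [show ((1/2 : ℝ) : EReal) * ⊥ = ⊥ by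
      exact EReal.coe_mul_bot_of_pos (by norm_num)] at h
    simp at h
  · lift J u to ℝ using ⟨htop, hbot⟩ with r hr
    norm_cast at h ⊢
    linarith

lemma aux_limit {X K : ℝ} (hK : 0 ≤ K) (h : ∀ t : ℝ, 0 < t → t ≤ 1 → 0 ≤ X + t * K) :
    0 ≤ X := by
  by_contra hX
  push_neg at hX
  set t := min 1 ((-X) / (2 * (K + 1))) with ht
  have h2K : (0:ℝ) < 2 * (K + 1) := by linarith
  have htpos : 0 < t := lt_min one_pos (div_pos (by linarith) h2K)
  have h1 : t * (2 * (K + 1)) ≤ -X := by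
    have := min_le_right 1 ((-X) / (2 * (K + 1)))
    calc t * (2 * (K + 1)) ≤ ((-X) / (2 * (K + 1))) * (2 * (K + 1)) := by
          exact mul_le_mul_of_nonneg_right this h2K.le
      _ = -X := by field_simp
  have h3 : t * K < t * (2 * (K + 1)) := by nlinarith
  have := h t htpos (min_le_left _ _)
  linarith

set_option maxHeartbeats 1000000 in
lemma keyLemma (J : H → EReal) (hproper : ProperFn J) (hconv : ConvexFn J)
    (hhom : AbsOneHom J)
    (u : H) (hperp : InNullPerp J u) (hu : ‖u‖ = 1) (hJu : 0 < J u) (hJut : J u ≠ ⊤)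
    (α : ℝ) (hα : 0 < α) (hαlt : (α : EReal) < Jdual J u)
    (v : H) (hv : IsProxPt J α u v) :
    v ≠ 0 ∧ J (‖v‖⁻¹ • v) ≤ J u ∧
      (J (‖v‖⁻¹ • v) = J u ↔ InSubdiff J u (((J u).toReal / ‖u‖ ^ 2) • u)) := by
  have hbot := hproper.1
  set ju := (J u).toReal with hju_def
  have hju : J u = (ju : EReal) := (EReal.coe_toReal hJut (hbot u)).symm
  have hjup : 0 < ju := EReal.coe_pos.1 (hju ▸ hJu)
  -- the objective at u
  have hobju : ProxObj J α u u = ((α * ju : ℝ) : EReal) := by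
    simp only [ProxObj, sub_self, norm_zero, hju, ← EReal.coe_mul]
    norm_num
  -- J v is finite
  have hJvt : J v ≠ ⊤ := by
    intro htop
    have h := hv u
    rw [hobju] at h
    simp only [ProxObj, htop, EReal.mul_top_of_pos (EReal.coe_pos.2 hα)] at h
    rw [EReal.coe_add_top] at h
    exact absurd h (not_le.2 (EReal.coe_lt_top _))
  set jv := (J v).toReal with hjv_def
  have hjv : J v = (jv : EReal) := (EReal.coe_toReal hJvt (hbot v)).symm
  have hjv0 : 0 ≤ jv := EReal.coe_nonneg.1 (hjv ▸ JJ_nonneg J hconv hhom v)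
  -- real comparison of objectives
  have hvr : ∀ w : H, ∀ jw : ℝ, J w = (jw : EReal) →
      2⁻¹ * ‖v - u‖ ^ 2 + α * jv ≤ 2⁻¹ * ‖w - u‖ ^ 2 + α * jw := by
    intro w jw hw
    have h := hv w
    rw [ProxObj, ProxObj, hjv, hw] at h
    norm_cast at h
  -- step A : basic bound
  have hA : 2⁻¹ * ‖v - u‖ ^ 2 + α * jv ≤ α * ju := by
    have := hvr u ju hju
    rw [sub_self, norm_zero] at this
    simpa using this
  -- step B : v ≠ 0
  have hvne : v ≠ 0 := by
    intro hv0
    obtain ⟨⟨p, hpperp, hppos⟩, hplt⟩ := lt_iSup_iff.1 hαlt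
    simp only at hplt
    have hJpt : J p ≠ ⊤ := by
      intro htop
      rw [htop, EReal.div_top] at hplt
      exact (not_lt.2 (EReal.coe_nonneg.2 hα.le)) hplt
    set jp := (J p).toReal with hjp_def
    have hjp : J p = (jp : EReal) := (EReal.coe_toReal hJpt (hbot p)).symm
    have hjpp : 0 < jp := EReal.coe_pos.1 (hjp ▸ hppos)
    rw [hjp, ← EReal.coe_div, EReal.coe_lt_coe_iff] at hplt
    have hip : α * jp < ⟪u, p⟫ := (lt_div_iff₀ hjpp).1 hplt
    have hpne : p ≠ 0 := by
      intro h0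
      rw [h0, hhom.1] at hppos
      exact lt_irrefl _ hppos
    have hpn : (0:ℝ) < ‖p‖ := norm_pos_iff.2 hpne
    set t := (⟪u, p⟫ - α * jp) / ‖p‖ ^ 2 with htdef
    have htpos : 0 < t := div_pos (by linarith) (by positivity)
    have hJtp : J (t • p) = ((t * jp : ℝ) : EReal) := by
      rw [JJ_smul J hhom htpos.le, hjp]; exact (EReal.coe_mul t jp).symm
    have h := hvr (t • p) (t * jp) hJtp
    have hjv0' : jv = 0 := by
      have : J v = 0 := by rw [hv0, hhom.1]
      rw [hjv] at this
      exact_mod_cast this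
    rw [hv0, hjv0'] at h
    have hexp : ‖t • p - u‖ ^ 2 = t^2 * ‖p‖^2 - 2 * (t * ⟪u, p⟫) + 1 := by
      rw [norm_sub_sq_real, norm_smul, real_inner_smul_left]
      rw [hu, real_inner_comm p u]
      rw [mul_pow, Real.norm_eq_abs, sq_abs]
      ring
    rw [hexp] at h
    rw [zero_sub, norm_neg, hu] at h
    have ht2 : t * ‖p‖ ^ 2 = ⟪u, p⟫ - α * jp := by
      rw [htdef]; field_simp
    nlinarith [sq_nonneg t, mul_pos htpos hpn]
  have hnv : (0:ℝ) < ‖v‖ := norm_pos_iff.2 hvne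
  -- step C : key decrease
  have hJnu : J (‖v‖ • u) = ((‖v‖ * ju : ℝ) : EReal) := by
    rw [JJ_smul J hhom (norm_nonneg v), hju]; exact (EReal.coe_mul _ _).symm
  have hCr := hvr (‖v‖ • u) (‖v‖ * ju) hJnu
  have hCnorm : ‖‖v‖ • u - u‖ ^ 2 = (‖v‖ - 1)^2 := by
    have : ‖v‖ • u - u = (‖v‖ - 1) • u := by
      rw [sub_smul, one_smul]
    rw [this, norm_smul, hu, mul_one, Real.norm_eq_abs, sq_abs]
  have hvu2 : ‖v - u‖ ^ 2 = ‖v‖^2 - 2 * ⟪v, u⟫ + 1 := by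
    rw [norm_sub_sq_real, hu]; ring
  have hcs : ⟪v, u⟫ ≤ ‖v‖ := by
    have := real_inner_le_norm v u
    rwa [hu, mul_one] at this
  have hkey : jv ≤ ‖v‖ * ju := by
    rw [hCnorm, hvu2] at hCr
    nlinarith
  have hJup : J (‖v‖⁻¹ • v) = ((‖v‖⁻¹ * jv : ℝ) : EReal) := by
    rw [JJ_smul J hhom (inv_nonneg.2 hnv.le), hjv]; exact (EReal.coe_mul _ _).symm
  have hle : J (‖v‖⁻¹ • v) ≤ J u := by
    rw [hJup, hju, EReal.coe_le_coe_iff]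
    rw [inv_mul_le_iff₀ hnv]
    calc jv ≤ ‖v‖ * ju := hkey
      _ = ‖v‖ * ju := rfl
  -- subgradient-type inequality from the prox characterization
  have hgrad : ∀ w : H, ((jv + ⟪u - v, w - v⟫ / α : ℝ) : EReal) ≤ J w := by
    intro w
    by_cases hwtop : J w = ⊤
    · rw [hwtop]; exact le_top
    set jw := (J w).toReal with hjw_def
    have hjw : J w = (jw : EReal) := (EReal.coe_toReal hwtop (hbot w)).symm
    rw [hjw, EReal.coe_le_coe_iff]
    have hstep : ∀ t : ℝ, 0 < t → t ≤ 1 →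
        0 ≤ (⟪v - u, w - v⟫ + α * (jw - jv)) + t * (2⁻¹ * ‖w - v‖ ^ 2) := by
      intro t ht0 ht1
      have hconvw : J (t • w + (1 - t) • v) ≤ ((t * jw + (1 - t) * jv : ℝ) : EReal) := by
        have h := hconv w v t ht0.le ht1
        rw [hjw, hjv] at h
        calc J (t • w + (1 - t) • v) ≤ _ := h
          _ = _ := by norm_cast
      have hwtt : J (t • w + (1 - t) • v) ≠ ⊤ :=
        ne_top_of_le_ne_top (EReal.coe_ne_top _) hconvw
      set jwt := (J (t • w + (1 - t) • v)).toReal with hjwt_def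
      have hjwt : J (t • w + (1 - t) • v) = (jwt : EReal) :=
        (EReal.coe_toReal hwtt (hbot _)).symm
      have hjwtle : jwt ≤ t * jw + (1 - t) * jv :=
        EReal.coe_le_coe_iff.1 (hjwt ▸ hconvw)
      have h := hvr _ jwt hjwt
      have hexp : ‖(t • w + (1 - t) • v) - u‖ ^ 2
          = ‖v - u‖ ^ 2 + 2 * (t * ⟪v - u, w - v⟫) + t ^ 2 * ‖w - v‖ ^ 2 := by
        have he : (t • w + (1 - t) • v) - u = (v - u) + t • (w - v) := by module
        rw [he, norm_add_sq_real, real_inner_smul_right, norm_smul, Real.norm_eq_abs,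
          mul_pow, sq_abs]
      rw [hexp] at h
      have h2 : 0 ≤ t * ((⟪v - u, w - v⟫ + α * (jw - jv)) + t * (2⁻¹ * ‖w - v‖ ^ 2)) := by
        nlinarith [mul_le_mul_of_nonneg_left hjwtle hα.le]
      have h3 : t * 0 ≤ t * ((⟪v - u, w - v⟫ + α * (jw - jv)) + t * (2⁻¹ * ‖w - v‖ ^ 2)) := by
        linarith [h2]
      exact le_of_mul_le_mul_left h3 ht0
    have h0 := aux_limit (by positivity) hstep
    have hneg : ⟪u - v, w - v⟫ = -⟪v - u, w - v⟫ := by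
      rw [show u - v = -(v - u) by abel, inner_neg_left]
    have hdiv : ⟪u - v, w - v⟫ / α ≤ jw - jv := by
      rw [hneg]
      rw [div_le_iff₀ hα]
      nlinarith [h0]
    linarith
  have hcoef : (J u).toReal / ‖u‖ ^ 2 = ju := by rw [hu]; norm_num; rfl
  rw [hcoef]
  refine ⟨hvne, hle, ?_, ?_⟩
  · -- equality implies subdifferential condition
    intro heq
    have hjveq : jv = ‖v‖ * ju := by
      rw [hJup, hju] at heq
      have := EReal.coe_eq_coe_iff.1 heq
      field_simp at this
      linarith [this]
    have hinner : ⟪v, u⟫ = ‖v‖ := by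
      rw [hCnorm, hvu2] at hCr
      nlinarith [hcs]
    have hveq : v = ‖v‖ • u := by
      have hz : ‖v - ‖v‖ • u‖ ^ 2 = 0 := by
        rw [norm_sub_sq_real, real_inner_smul_right, norm_smul, hu, mul_one,
          Real.norm_eq_abs, abs_of_nonneg (norm_nonneg v), hinner]
        ring
      have := pow_eq_zero_iff (two_ne_zero) |>.1 hz
      rw [norm_eq_zero, sub_eq_zero] at this
      exact this
    set c := ‖v‖ with hc_def
    -- identify (1 - c)/α = ju
    have hg0 : jv + ⟪u - v, (0:H) - v⟫ / α ≤ 0 := by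
      have h := hgrad 0
      rw [hhom.1, ← EReal.coe_zero, EReal.coe_le_coe_iff] at h
      exact h
    have hg2 : jv + ⟪u - v, (2:ℝ) • v - v⟫ / α ≤ 2 * jv := by
      have hJ2v : J ((2:ℝ) • v) = ((2 * jv : ℝ) : EReal) := by
        rw [JJ_smul J hhom (by norm_num : (0:ℝ) ≤ 2), hjv]; norm_cast
      have h := hgrad ((2:ℝ) • v)
      rw [hJ2v, EReal.coe_le_coe_iff] at h
      exact h
    have hiuv : ⟪u - v, v⟫ = (1 - c) * c := by
      rw [hveq, inner_sub_left, real_inner_smul_left, real_inner_smul_right,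
        real_inner_self_eq_norm_sq, hu]
      ring
    have hi0 : ⟪u - v, (0:H) - v⟫ = -((1 - c) * c) := by
      rw [zero_sub, inner_neg_right, hiuv]
    have hi2 : ⟪u - v, (2:ℝ) • v - v⟫ = (1 - c) * c := by
      have : (2:ℝ) • v - v = v := by module
      rw [this, hiuv]
    rw [hi0] at hg0
    rw [hi2] at hg2
    have hmu : 1 - c = α * ju := by
      have e0 : jv ≤ (1 - c) * c / α := by rw [neg_div] at hg0; linarith
      have e2 : (1 - c) * c / α ≤ jv := by linarith [hg2]
      have h3 : jv = (1 - c) * c / α := le_antisymm e0 e2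
      rw [hjveq, eq_div_iff hα.ne'] at h3
      have hcne : c ≠ 0 := hnv.ne'
      have h4 : c * (1 - c) = c * (α * ju) := by linear_combination -h3
      exact mul_left_cancel₀ hcne h4
    -- conclude subdifferential
    intro w
    have hiw : ⟪ju • u, w - u⟫ = ju * ⟪u, w⟫ - ju := by
      rw [real_inner_smul_left, inner_sub_right, real_inner_self_eq_norm_sq, hu]
      ring
    rw [hju, hiw, ← EReal.coe_add]
    have hgw := hgrad w
    have hiwv : ⟪u - v, w - v⟫ = (1 - c) * (⟪u, w⟫ - c) := by
      rw [hveq, inner_sub_left, inner_sub_right, inner_sub_right,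
        real_inner_smul_left, real_inner_smul_right, real_inner_smul_left,
        real_inner_smul_right, real_inner_self_eq_norm_sq, hu]
      ring
    have heval : jv + ⟪u - v, w - v⟫ / α = ju + (ju * ⟪u, w⟫ - ju) := by
      rw [hjveq, hiwv, hmu]
      field_simp
      ring
    rw [← heval]
    exact hgw
  · -- subdifferential condition implies equality
    intro hsub
    have hq : ∀ w : H, ((ju * ⟪u, w⟫ : ℝ) : EReal) ≤ J w := by
      intro w
      have h := hsub w
      have hiq : ⟪ju • u, w - u⟫ = ju * ⟪u, w⟫ - ju := by
        rw [real_inner_smul_left, inner_sub_right, real_inner_self_eq_norm_sq, hu]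
        ring
      rw [hju, hiq, ← EReal.coe_add] at h
      calc ((ju * ⟪u, w⟫ : ℝ) : EReal) = ((ju + (ju * ⟪u, w⟫ - ju) : ℝ) : EReal) := by
            norm_num
        _ ≤ J w := h
    have hdle : Jdual J u ≤ ((ju⁻¹ : ℝ) : EReal) := by
      rw [Jdual]
      apply iSup_le
      rintro ⟨p, hp1, hp2⟩
      simp only
      by_cases hpt : J p = ⊤
      · rw [hpt, EReal.div_top]
        exact EReal.coe_nonneg.2 (by positivity)
      · set jp := (J p).toReal with hjp_def
        have hjp : J p = (jp : EReal) := (EReal.coe_toReal hpt (hbot p)).symm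
        have hjpp : 0 < jp := EReal.coe_pos.1 (hjp ▸ hp2)
        have hqp := hq p
        rw [hjp, EReal.coe_le_coe_iff] at hqp
        rw [hjp, ← EReal.coe_div, EReal.coe_le_coe_iff, div_le_iff₀ hjpp]
        rw [inv_mul_eq_div, le_div_iff₀ hjup]
        linarith [hqp]
    have hα1 : α * ju < 1 := by
      have h := lt_of_lt_of_le hαlt hdle
      rw [EReal.coe_lt_coe_iff] at h
      have := mul_lt_mul_of_pos_right h hjup
      rwa [inv_mul_cancel₀ hjup.ne'] at this
    have hc0 : 0 < 1 - α * ju := by linarith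
    have hJcu : J ((1 - α * ju) • u) = (((1 - α * ju) * ju : ℝ) : EReal) := by
      rw [JJ_smul J hhom hc0.le, hju]; norm_cast
    have hE := hvr ((1 - α * ju) • u) ((1 - α * ju) * ju) hJcu
    have hqv : ju * ⟪u, v⟫ ≤ jv := by
      have h := hq v
      rw [hjv, EReal.coe_le_coe_iff] at h
      exact h
    have hcu2 : ‖(1 - α * ju) • u - u‖ ^ 2 = (α * ju) ^ 2 := by
      have he : (1 - α * ju) • u - u = -((α * ju) • u) := by module
      rw [he, norm_neg, norm_smul, hu, mul_one, Real.norm_eq_abs, sq_abs]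
    have hvcu : ‖v - (1 - α * ju) • u‖ ^ 2 ≤ 0 := by
      rw [norm_sub_sq_real, real_inner_smul_right, norm_smul, hu, mul_one,
        Real.norm_eq_abs, sq_abs]
      rw [hcu2, hvu2] at hE
      nlinarith [mul_le_mul_of_nonneg_left hqv hα.le, real_inner_comm v u]
    have hveq : v = (1 - α * ju) • u := by
      have hz : ‖v - (1 - α * ju) • u‖ ^ 2 = 0 :=
        le_antisymm hvcu (by positivity)
      have := pow_eq_zero_iff (two_ne_zero) |>.1 hz
      rwa [norm_eq_zero, sub_eq_zero] at this
    have hnorm : ‖v‖ = 1 - α * ju := by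
      rw [hveq, norm_smul, hu, mul_one, Real.norm_eq_abs, abs_of_pos hc0]
    have hback : ‖v‖⁻¹ • v = u := by
      rw [hnorm, hveq, smul_smul, inv_mul_cancel₀ hc0.ne', one_smul]
    rw [hback]

/-- **Energy decrease of the proximal power method.**
Let `J` be proper, convex, lsc, absolutely one-homogeneous, `u ∈ N(J)^⊥` with
`‖u‖ = 1`, `0 < J u < ∞`, let `0 < α < J_*(u)` and `v = prox_α^J(u)`. Then
`v ≠ 0` and the renormalized vector `u⁺ = v/‖v‖` satisfies `J(u⁺) ≤ J(u)`, with
equality iff `λ • u ∈ ∂J(u)` for `λ = J(u)/‖u‖² = J(u)`. In particular, along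
the proximal power method `u^{k+1} = prox_{α(u^k)}^J(u^k)/‖prox_{α(u^k)}^J(u^k)‖`
with `α(u^k) < J_*(u^k)` the energy `J(u^{k+1}) ≤ J(u^k)` decreases. -/
theorem energy_decrease_of_proximal_power_method
    (J : H → EReal) (hproper : ProperFn J) (hconv : ConvexFn J)
    (hlsc : LowerSemicontinuous J) (hhom : AbsOneHom J) :
    (∀ (u : H), InNullPerp J u → ‖u‖ = 1 → 0 < J u → J u ≠ ⊤ →
      ∀ (α : ℝ), 0 < α → (α : EReal) < Jdual J u →
      ∀ (v : H), IsProxPt J α u v →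
        v ≠ 0 ∧ J (‖v‖⁻¹ • v) ≤ J u ∧
        (J (‖v‖⁻¹ • v) = J u ↔ InSubdiff J u (((J u).toReal / ‖u‖ ^ 2) • u))) ∧
    (∀ (useq vseq : ℕ → H) (αseq : ℕ → ℝ),
      (∀ k, InNullPerp J (useq k)) → (∀ k, ‖useq k‖ = 1) →
      (∀ k, 0 < J (useq k)) → (∀ k, J (useq k) ≠ ⊤) →
      (∀ k, 0 < αseq k) → (∀ k, (αseq k : EReal) < Jdual J (useq k)) →
      (∀ k, IsProxPt J (αseq k) (useq k) (vseq k)) →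
      (∀ k, useq (k + 1) = ‖vseq k‖⁻¹ • vseq k) →
      ∀ k, J (useq (k + 1)) ≤ J (useq k)) := by
  constructor
  · intro u hperp hu hJu hJut α hα hαlt v hv
    exact keyLemma J hproper hconv hhom u hperp hu hJu hJut α hα hαlt v hv
  · intro useq vseq αseq h1 h2 h3 h4 h5 h6 h7 h8 k
    rw [h8 k]
    exact (keyLemma J hproper hconv hhom (useq k) (h1 k) (h2 k) (h3 k) (h4 k)
      (αseq k) (h5 k) (h6 k) (vseq k) (h7 k)).2.1

end
end

section
/- Let H be a real Hilbert space and J : H → ℝ ∪ {+∞} be a proper, convex, lower semi-continuous, absolutely one-homogeneous functional. Let (u^k) be generated by the proximal power method u⁰ = f with f ∈ N(J)^⊥, ‖f‖ = 1, 0 < J(f) < ∞, v^k = prox_α^J(u^k), u^{k+1} = v^k/‖v^k‖, with a constant parameter α satisfying 0 < α < 1/J(u⁰). Then for every k the iterate satisfies α < 1/J(u^k) ≤ J_*(u^k), hence v^k = prox_α^J(u^k) ≠ 0 and the method is well-defined. -/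
open scoped RealInnerProductSpace

noncomputable section

variable {H : Type*} [NormedAddCommGroup H] [InnerProductSpace ℝ H] [CompleteSpace H]

/-- Real quadratic trick: if `0 ≤ h A + ½ h² B` for all `h > -1` and `B ≥ 0`, then `A = 0`. -/
lemma quad_coeff_zero {A B : ℝ} (hB : 0 ≤ B)
    (hq : ∀ h : ℝ, -1 < h → 0 ≤ h * A + 2⁻¹ * h ^ 2 * B) : A = 0 := by
  by_contra hA0
  set D : ℝ := B + A ^ 2 + 1 with hD_def
  have hD : 0 < D := by positivity
  have hAD : A < D := by nlinarith [sq_nonneg (A - 1)]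
  set h0 : ℝ := -A / D with h0_def
  have h1 : -1 < h0 := by
    rw [h0_def, lt_div_iff₀ hD]
    linarith
  have h2 := hq h0 h1
  have e : h0 * D = -A := by
    rw [h0_def]; field_simp
  have h3 : (h0 * A + 2⁻¹ * h0 ^ 2 * B) * D ^ 2
      = (h0 * D) * A * D + 2⁻¹ * (h0 * D) ^ 2 * B := by ring
  rw [e] at h3
  have h4 : 0 ≤ (h0 * A + 2⁻¹ * h0 ^ 2 * B) * D ^ 2 := mul_nonneg h2 (by positivity)
  rw [h3] at h4
  have hA2 : 0 < A ^ 2 := by positivity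
  nlinarith [h4, hA2, hB]

lemma Jneg (J : H → EReal) (hhom : AbsOneHom J) (u : H) : J (-u) = J u := by
  have h := hhom.2 (-1) (by norm_num) u
  simpa using h

lemma Jnonneg (J : H → EReal) (hproper : ProperFn J) (hconv : ConvexFn J)
    (hhom : AbsOneHom J) (u : H) : 0 ≤ J u := by
  by_contra hcon
  push_neg at hcon
  have hne : J u ≠ ⊥ := hproper.1 u
  have hnt : J u ≠ ⊤ := by
    intro ht; rw [ht] at hcon; exact (not_lt.2 le_top) hcon
  obtain ⟨x, hx⟩ : ∃ x : ℝ, J u = (x : EReal) := ⟨(J u).toReal, (EReal.coe_toReal hnt hne).symm⟩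
  have hxneg : x < 0 := by rw [hx] at hcon; exact_mod_cast hcon
  have key := hconv u (-u) (1/2) (by norm_num) (by norm_num)
  have he : (1/2 : ℝ) • u + ((1 - 1/2 : ℝ)) • (-u) = 0 := by
    rw [smul_neg]; norm_num
  rw [he, hhom.1, hx, Jneg J hhom, hx] at key
  norm_cast at key
  linarith

/-- Subadditivity against null vectors: if `J n = 0` and `J x = s` then `J (x + n) ≤ s`. -/
lemma add_null_le (J : H → EReal) (hconv : ConvexFn J) (hhom : AbsOneHom J)
    {x n : H} {s : ℝ} (hx : J x = (s : EReal)) (hn : J n = 0) :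
    J (x + n) ≤ (s : EReal) := by
  have hc := hconv x n (1/2) (by norm_num) (by norm_num)
  rw [hx, hn, mul_zero, add_zero] at hc
  have h2 := hhom.2 2 (by norm_num) ((1/2 : ℝ) • x + ((1 - 1/2 : ℝ)) • n)
  have he : (2 : ℝ) • ((1/2 : ℝ) • x + ((1 - 1/2 : ℝ)) • n) = x + n := by
    rw [smul_add, smul_smul, smul_smul]; norm_num
  rw [he] at h2
  rw [h2]
  calc ((|(2:ℝ)| : ℝ) : EReal) * J ((1/2 : ℝ) • x + ((1 - 1/2 : ℝ)) • n)
      ≤ ((|(2:ℝ)| : ℝ) : EReal) * (((1/2 : ℝ) : EReal) * (s : EReal)) := by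
        exact mul_le_mul_of_nonneg_left hc (by norm_num)
    _ = (s : EReal) := by norm_cast; ring

/-- Main step lemma: all the properties of the prox point of a good input. -/
lemma prox_step (J : H → EReal) (hproper : ProperFn J) (hconv : ConvexFn J)
    (hhom : AbsOneHom J) (α : ℝ) (hα : 0 < α)
    (u : H) (hperp : InNullPerp J u) (hnorm : ‖u‖ = 1)
    (r : ℝ) (hr : J u = (r : EReal)) (hrpos : 0 < r) (hαr : α * r < 1)
    (v : H) (hpv : IsProxPt J α u v) :
    v ≠ 0 ∧ InNullPerp J (‖v‖⁻¹ • v) ∧ ‖(‖v‖⁻¹ • v)‖ = 1 ∧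
      ∃ s : ℝ, J (‖v‖⁻¹ • v) = (s : EReal) ∧ 0 < s ∧ α * s < 1 := by
  -- finiteness of J v
  have hObju : ProxObj J α u u = ((α * r : ℝ) : EReal) := by
    rw [ProxObj, hr, sub_self, norm_zero]
    norm_num
  have h0 := hpv u
  rw [hObju] at h0
  have hvt : J v ≠ ⊤ := by
    intro ht
    rw [ProxObj, ht, EReal.coe_mul_top_of_pos hα,
      EReal.add_top_of_ne_bot (EReal.coe_ne_bot _)] at h0
    exact ((EReal.coe_lt_top _).not_ge) h0
  obtain ⟨s, hs⟩ : ∃ s : ℝ, J v = (s : EReal) :=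
    ⟨(J v).toReal, (EReal.coe_toReal hvt (hproper.1 v)).symm⟩
  have hs0 : 0 ≤ s := by
    have := Jnonneg J hproper hconv hhom v
    rw [hs] at this; exact_mod_cast this
  -- real comparison helper
  have hle : ∀ w : H, ∀ t : ℝ, J w ≤ (t : EReal) →
      2⁻¹ * ‖v - u‖ ^ 2 + α * s ≤ 2⁻¹ * ‖w - u‖ ^ 2 + α * t := by
    intro w t hw
    have h1 : ProxObj J α u v ≤ ((2⁻¹ * ‖w - u‖ ^ 2 + α * t : ℝ) : EReal) := by
      refine (hpv w).trans ?_
      rw [ProxObj]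
      calc ((2⁻¹ * ‖w - u‖ ^ 2 : ℝ) : EReal) + (α : EReal) * J w
          ≤ ((2⁻¹ * ‖w - u‖ ^ 2 : ℝ) : EReal) + (α : EReal) * (t : EReal) := by
            exact add_le_add_right (mul_le_mul_of_nonneg_left hw (by exact_mod_cast hα.le : (0 : EReal) ≤ (α : EReal))) _
        _ = _ := by norm_cast
    rw [ProxObj, hs] at h1
    exact_mod_cast h1
  -- v is orthogonal to the null space
  have hperpvu : ∀ n : H, J n = 0 → ⟪v, n⟫ = 0 := by
    intro n hn
    have key : ∀ c : ℝ, J (v + c • n) ≤ (s : EReal) := by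
      intro c
      rcases eq_or_ne c 0 with hc | hc
      · simp [hc, hs]
      · have hcn : J (c • n) = 0 := by rw [hhom.2 c hc, hn, mul_zero]
        exact add_null_le J hconv hhom hs hcn
    have hq2 : ∀ c : ℝ, 0 ≤ c * (2 * ⟪v - u, n⟫) + 2⁻¹ * c ^ 2 * (2 * ‖n‖ ^ 2) := by
      intro c
      have h1 := hle (v + c • n) s (key c)
      have he : v + c • n - u = (v - u) + c • n := add_sub_right_comm v (c • n) u
      have h2 : ‖v + c • n - u‖ ^ 2
          = ‖v - u‖ ^ 2 + 2 * (c * ⟪v - u, n⟫) + c ^ 2 * ‖n‖ ^ 2 := by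
        rw [he, norm_add_sq_real, real_inner_smul_right, norm_smul]
        simp [mul_pow]
      rw [h2] at h1
      linarith
    have hz := quad_coeff_zero (by positivity) (fun c _ => hq2 c)
    have hvun : ⟪v - u, n⟫ = 0 := by linarith
    have hun := hperp n hn
    rw [inner_sub_left] at hvun
    linarith
  -- v ≠ 0
  have hvne : v ≠ 0 := by
    intro hv0
    have hs00 : s = 0 := by
      have : J v = 0 := by rw [hv0, hhom.1]
      rw [hs] at this; exact_mod_cast this
    set t : ℝ := 1 - α * r with ht_def
    have ht : 0 < t := by simp [ht_def]; linarith
    have htlt : t < 1 := by simp [ht_def]; positivity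
    have hJtu : J (t • u) ≤ ((t * r : ℝ) : EReal) := by
      rw [hhom.2 t (ne_of_gt ht), hr, abs_of_pos ht]
      norm_cast
    have h1 := hle (t • u) (t * r) hJtu
    rw [hv0, hs00] at h1
    have h2 : ‖(0 : H) - u‖ = 1 := by rw [zero_sub, norm_neg, hnorm]
    have h3 : ‖t • u - u‖ = 1 - t := by
      have h3e : t • u - u = (t - 1) • u := by module
      rw [h3e, norm_smul, hnorm, mul_one, Real.norm_eq_abs, abs_of_neg (by linarith)]
      ring
    rw [h2, h3] at h1
    have hsq : 0 < (1 - α * r) ^ 2 := by positivity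
    nlinarith [h1, hsq]
  have hm : 0 < ‖v‖ := norm_pos_iff.2 hvne
  -- optimality along the ray through v
  have hA : ‖v‖ ^ 2 - ⟪u, v⟫ + α * s = 0 := by
    apply quad_coeff_zero (B := ‖v‖ ^ 2) (by positivity)
    intro h hh
    have h1p : 0 < 1 + h := by linarith
    have hJ : J ((1 + h) • v) ≤ (((1 + h) * s : ℝ) : EReal) := by
      rw [hhom.2 _ (ne_of_gt h1p), hs, abs_of_pos h1p]
      norm_cast
    have h2 := hle _ _ hJ
    have he : (1 + h) • v - u = (v - u) + h • v := by
      rw [add_smul, one_smul]; abel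
    have h4 : ‖(1 + h) • v - u‖ ^ 2
        = ‖v - u‖ ^ 2 + 2 * (h * ⟪v - u, v⟫) + h ^ 2 * ‖v‖ ^ 2 := by
      rw [he, norm_add_sq_real, real_inner_smul_right, norm_smul]
      simp [mul_pow]
    rw [h4] at h2
    have h5 : ⟪v - u, v⟫ = ‖v‖ ^ 2 - ⟪u, v⟫ := by
      rw [inner_sub_left, real_inner_self_eq_norm_sq]
    rw [h5] at h2
    nlinarith [h2]
  have hcs : ⟪u, v⟫ ≤ ‖v‖ := by
    have := real_inner_le_norm u v
    rwa [hnorm, one_mul] at this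
  -- s > 0
  have hspos : 0 < s := by
    rcases lt_or_eq_of_le hs0 with h | h
    · exact h
    · exfalso
      have : J v = 0 := by rw [hs, ← h]; norm_num
      have hvv := hperpvu v this
      rw [real_inner_self_eq_norm_sq] at hvv
      exact hvne (by simpa [hm.ne'] using hvv)
  -- the scaled conclusion
  have hαs : α * (‖v‖⁻¹ * s) < 1 := by
    have hkey : α * s ≤ ‖v‖ * (1 - ‖v‖) := by nlinarith [hA, hcs]
    have heq : α * (‖v‖⁻¹ * s) = (α * s) / ‖v‖ := by
      field_simp
    rw [heq, div_lt_one hm]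
    nlinarith [mul_pos hm hm]
  refine ⟨hvne, ?_, ?_, ⟨‖v‖⁻¹ * s, ?_, ?_, hαs⟩⟩
  · intro n hn
    rw [real_inner_smul_left, hperpvu n hn, mul_zero]
  · rw [norm_smul, norm_inv, norm_norm, inv_mul_cancel₀ hm.ne']
  · rw [hhom.2 _ (inv_ne_zero hm.ne'), hs, abs_of_pos (inv_pos.2 hm)]
    norm_cast
  · positivity

/-- **Well-definedness of the proximal power method with constant parameter.**
Let `J` be proper, convex, lsc, absolutely one-homogeneous, and let `(u^k)` be
the proximal power method starting from `u⁰ = f ∈ N(J)^⊥` with `‖f‖ = 1`,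
`0 < J f < ∞`, with constant parameter `0 < α < 1/J(u⁰)`. Then for every `k`
one has `α < 1/J(u^k) ≤ J_*(u^k)`, hence `v^k = prox_α^J(u^k) ≠ 0` and the
method is well-defined. -/
theorem well_definedness_constant_parameter
    (J : H → EReal) (hproper : ProperFn J) (hconv : ConvexFn J)
    (hlsc : LowerSemicontinuous J) (hhom : AbsOneHom J)
    (f : H) (hf : InNullPerp J f) (hfnorm : ‖f‖ = 1)
    (hJfpos : 0 < J f) (hJffin : J f ≠ ⊤)
    (α : ℝ) (hαpos : 0 < α) (hαlt : (α : EReal) < (J f)⁻¹)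
    (useq vseq : ℕ → H)
    (hinit : useq 0 = f)
    (hv : ∀ k, IsProxPt J α (useq k) (vseq k))
    (hstep : ∀ k, useq (k + 1) = ‖vseq k‖⁻¹ • vseq k) :
    ∀ k, (α : EReal) < (J (useq k))⁻¹ ∧ (J (useq k))⁻¹ ≤ Jdual J (useq k) ∧
      vseq k ≠ 0 := by
  -- extract the real value of J f
  obtain ⟨r0, hr0⟩ : ∃ r : ℝ, J f = (r : EReal) :=
    ⟨(J f).toReal, (EReal.coe_toReal hJffin (hproper.1 f)).symm⟩
  have hr0pos : 0 < r0 := by rw [hr0] at hJfpos; exact_mod_cast hJfpos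
  have hαr0 : α * r0 < 1 := by
    rw [hr0, ← EReal.coe_inv] at hαlt
    have h1 : α < r0⁻¹ := by exact_mod_cast hαlt
    have := mul_lt_mul_of_pos_right h1 hr0pos
    rwa [inv_mul_cancel₀ hr0pos.ne'] at this
  -- the invariant
  have inv : ∀ k, InNullPerp J (useq k) ∧ ‖useq k‖ = 1 ∧
      ∃ r : ℝ, J (useq k) = (r : EReal) ∧ 0 < r ∧ α * r < 1 := by
    intro k
    induction k with
    | zero => exact ⟨hinit ▸ hf, hinit ▸ hfnorm, ⟨r0, hinit ▸ hr0, hr0pos, hαr0⟩⟩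
    | succ k ih =>
      obtain ⟨hperp, hnorm, r, hr, hrpos, hαr⟩ := ih
      obtain ⟨_, h1, h2, s, h3, h4, h5⟩ :=
        prox_step J hproper hconv hhom α hαpos (useq k) hperp hnorm r hr hrpos hαr
          (vseq k) (hv k)
      rw [hstep k]
      exact ⟨h1, h2, s, h3, h4, h5⟩
  intro k
  obtain ⟨hperp, hnorm, r, hr, hrpos, hαr⟩ := inv k
  obtain ⟨hvne, _, _, _⟩ :=
    prox_step J hproper hconv hhom α hαpos (useq k) hperp hnorm r hr hrpos hαr
      (vseq k) (hv k)
  refine ⟨?_, ?_, hvne⟩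
  · rw [hr, ← EReal.coe_inv]
    have h2 : α < r⁻¹ := by
      rw [inv_eq_one_div, lt_div_iff₀ hrpos]
      linarith
    exact_mod_cast h2
  · have hJpos : (0 : EReal) < J (useq k) := by rw [hr]; exact_mod_cast hrpos
    have hle := le_iSup
      (fun p : {p : H // InNullPerp J p ∧ 0 < J p} =>
        ((⟪useq k, (p : H)⟫ : ℝ) : EReal) / J (p : H)) ⟨useq k, hperp, hJpos⟩
    refine le_trans ?_ hle
    have hin : ⟪useq k, useq k⟫ = 1 := by
      rw [real_inner_self_eq_norm_sq, hnorm, one_pow]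
    simp only [hin, hr]
    rw [show ((1 : ℝ) : EReal) = (1 : EReal) by norm_cast, one_div]

end
end

section
/- Let T : ℝ² → ℝ² be the single-layer ReLU network T(u₁, u₂) = (max(1 − u₁, 0), max(u₂ − 1, 0)). Then the set of solutions (u, λ) of the eigenproblem T(u) = λ u is exactly the union of the following four families: (i) u = (α, 0) with 0 < α < 1 and λ = (1 − α)/α; (ii) u = (1/(1 + α), 1/(1 − α)) with 0 < α < 1 and λ = α; (iii) u = (α, 0) with α < 0 and λ = (1 − α)/α; (iv) u = (u₁, u₂) with u₁ ≥ 1 and u₂ ≤ 1, and λ = 0. -/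
/-- **Eigenvectors of a toy 2-pixel ReLU network.**
Let `T : ℝ² → ℝ²`, `T (u₁, u₂) = (max (1 - u₁) 0, max (u₂ - 1) 0)`. The set of
solutions `(u, λ)` of the eigenproblem `T u = λ • u` is exactly the union of:
(i) `u = (α, 0)`, `0 < α < 1`, `λ = (1 - α)/α`;
(ii) `u = (1/(1+α), 1/(1-α))`, `0 < α < 1`, `λ = α`;
(iii) `u = (α, 0)`, `α < 0`, `λ = (1 - α)/α`;
(iv) `u₁ ≥ 1`, `u₂ ≤ 1`, `λ = 0`. -/
theorem toy_relu_network_eigenvectors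
    (T : ℝ × ℝ → ℝ × ℝ) (hT : ∀ u : ℝ × ℝ, T u = (max (1 - u.1) 0, max (u.2 - 1) 0))
    (u : ℝ × ℝ) (lam : ℝ) :
    T u = lam • u ↔
      ((∃ α : ℝ, 0 < α ∧ α < 1 ∧ u = (α, 0) ∧ lam = (1 - α) / α) ∨
       (∃ α : ℝ, 0 < α ∧ α < 1 ∧ u = (1 / (1 + α), 1 / (1 - α)) ∧ lam = α) ∨
       (∃ α : ℝ, α < 0 ∧ u = (α, 0) ∧ lam = (1 - α) / α) ∨
       (1 ≤ u.1 ∧ u.2 ≤ 1 ∧ lam = 0)) := by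
  rw [hT]
  have hsm : lam • u = (lam * u.1, lam * u.2) := rfl
  rw [hsm, Prod.ext_iff]
  constructor
  · rintro ⟨h1, h2⟩
    by_cases hl : lam = 0
    · subst hl
      simp only [zero_mul] at h1 h2
      refine Or.inr (Or.inr (Or.inr ⟨?_, ?_, rfl⟩))
      · have := max_eq_right_iff.mp h1; linarith
      · have := max_eq_right_iff.mp h2; linarith
    · -- first coordinate analysis
      have hu1 : 0 < 1 - u.1 ∧ lam * u.1 = 1 - u.1 := by
        rcases le_or_gt (1 - u.1) 0 with h | h
        · rw [max_eq_right h] at h1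
          have hz : u.1 = 0 := by
            rcases mul_eq_zero.mp h1.symm with h' | h'
            · exact absurd h' hl
            · exact h'
          rw [hz] at h; linarith
        · rw [max_eq_left h.le] at h1
          exact ⟨h, h1.symm⟩
      obtain ⟨hpos1, heq1⟩ := hu1
      have hu1ne : u.1 ≠ 0 := by
        intro h; rw [h, mul_zero] at heq1; linarith
      rcases le_or_gt (u.2 - 1) 0 with h | h
      · -- u.2 = 0 case
        rw [max_eq_right h] at h2
        have hz2 : u.2 = 0 := by
          rcases mul_eq_zero.mp h2.symm with h' | h'
          · exact absurd h' hl
          · exact h'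
        have hlam : lam = (1 - u.1) / u.1 := by
          field_simp
          linarith
        rcases lt_or_gt_of_ne hu1ne with hneg | hpos
        · refine Or.inr (Or.inr (Or.inl ⟨u.1, hneg, ?_, hlam⟩))
          exact Prod.ext rfl hz2
        · refine Or.inl ⟨u.1, hpos, by linarith, ?_, hlam⟩
          exact Prod.ext rfl hz2
      · -- u.2 > 1 case
        rw [max_eq_left h.le] at h2
        have heq2 : lam * u.2 = u.2 - 1 := h2.symm
        have hu2pos : 0 < u.2 := by linarith
        have hlpos : 0 < lam := by
          rcases lt_trichotomy lam 0 with h' | h' | h'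
          · nlinarith
          · exact absurd h' hl
          · exact h'
        have hl1 : lam < 1 := by nlinarith
        refine Or.inr (Or.inl ⟨lam, hlpos, hl1, ?_, rfl⟩)
        refine Prod.ext ?_ ?_
        · show u.1 = 1 / (1 + lam)
          have : (1 + lam) * u.1 = 1 := by linarith [heq1]
          field_simp
          linarith
        · show u.2 = 1 / (1 - lam)
          rw [eq_div_iff (by linarith : (1:ℝ) - lam ≠ 0)]
          linarith [heq2]
  · rintro (⟨α, h0, h1, rfl, hl⟩ | ⟨α, h0, h1, rfl, hl⟩ | ⟨α, h0, rfl, hl⟩ | ⟨h1, h2, hl⟩) <;>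
      subst hl
    · constructor
      · show max (1 - α) 0 = (1 - α) / α * α
        rw [max_eq_left (by linarith), div_mul_cancel₀ _ (ne_of_gt h0)]
      · simp
    · have ha : (0:ℝ) < 1 + lam := by linarith
      have hb : (0:ℝ) < 1 - lam := by linarith
      constructor
      · show max (1 - 1 / (1 + lam)) 0 = lam * (1 / (1 + lam))
        rw [max_eq_left]
        · field_simp; ring
        · rw [sub_nonneg, div_le_one ha]; linarith
      · show max (1 / (1 - lam) - 1) 0 = lam * (1 / (1 - lam))
        rw [max_eq_left]
        · field_simp; ring
        · rw [sub_nonneg, le_div_iff₀ hb]; linarith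
    · constructor
      · show max (1 - α) 0 = (1 - α) / α * α
        rw [max_eq_left (by linarith), div_mul_cancel₀ _ (ne_of_lt h0)]
      · simp
    · constructor
      · simp only [zero_mul]
        exact max_eq_right (by linarith)
      · simp only [zero_mul]
        exact max_eq_right (by linarith)
end
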